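/- arXiv:2502.03595 — 4 statements merged into one kernel-verified Lean document; each statement's English description precedes it below -/
import Mathlib

section
/- If X is path-connected, then the path components of (X×F)/G are precisely the images in (X×F)/G of the sets X × O, where O ranges over the G-orbits in F; in particular each such image is path-connected, open, and closed in (X×F)/G. -/
open MulAction

section Aux

variable {G X F : Type*} [Group G] [TopologicalSpace X] [MulAction G X]
    [ContinuousConstSMul G X] [TopologicalSpace F] [DiscreteTopology F]
    [MulAction G F] [PathConnectedSpace X]

private lemma aux_preimage (ω : orbitRel.Quotient G F) :
    Quotient.mk (orbitRel G (X × F)) ⁻¹' (Quotient.mk (orbitRel G (X × F)) ''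
      {xv : X × F | xv.2 ∈ ω.orbit}) = {xv : X × F | xv.2 ∈ ω.orbit} := by
  apply Set.Subset.antisymm
  · rintro xv ⟨yw, hyw, heq⟩
    obtain ⟨g, hg⟩ : yw ∈ MulAction.orbit G xv := Quotient.eq''.mp heq
    have h2 : xv.2 = g⁻¹ • yw.2 := by
      rw [← hg]; simp [Prod.smul_def]
    rw [Set.mem_setOf_eq, orbitRel.Quotient.mem_orbit] at hyw
    show xv.2 ∈ ω.orbit
    refine orbitRel.Quotient.mem_orbit.mpr ?_
    rw [← hyw, h2]
    exact Quotient.sound' ⟨g⁻¹, rfl⟩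
  · exact Set.subset_preimage_image _ _

private lemma aux_pathConn (ω : orbitRel.Quotient G F) :
    IsPathConnected (Quotient.mk (orbitRel G (X × F)) ''
      {xv : X × F | xv.2 ∈ ω.orbit}) := by
  obtain ⟨x0⟩ : Nonempty X := PathConnectedSpace.nonempty
  set v0 : F := ω.out
  have hv0 : v0 ∈ ω.orbit := by
    rw [orbitRel.Quotient.mem_orbit]; exact Quotient.out_eq' ω
  refine ⟨Quotient.mk _ (x0, v0), ⟨(x0, v0), hv0, rfl⟩, ?_⟩
  rintro q ⟨⟨x, v⟩, hv, rfl⟩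
  rw [Set.mem_setOf_eq, orbitRel.Quotient.mem_orbit] at hv
  have hmkeq : (Quotient.mk'' v : orbitRel.Quotient G F) = Quotient.mk'' v0 := by
    rw [hv]; exact (Quotient.out_eq' ω).symm
  obtain ⟨g, hg⟩ : v ∈ MulAction.orbit G v0 := Quotient.eq''.mp hmkeq
  have hmk : (Quotient.mk (orbitRel G (X × F)) (x, v)) =
      Quotient.mk (orbitRel G (X × F)) (g⁻¹ • x, v0) := by
    refine Quotient.sound ⟨g, ?_⟩
    simp [Prod.smul_def, hg]
  rw [hmk]
  have hcont : Continuous fun y : X => Quotient.mk (orbitRel G (X × F)) (y, v0) :=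
    continuous_quotient_mk'.comp (Continuous.prodMk_left v0)
  obtain ⟨γ⟩ := PathConnectedSpace.joined x0 (g⁻¹ • x)
  refine ⟨γ.map hcont, fun t => ⟨(γ t, v0), hv0, rfl⟩⟩

private lemma aux_clopen (ω : orbitRel.Quotient G F) :
    IsOpen (Quotient.mk (orbitRel G (X × F)) '' {xv : X × F | xv.2 ∈ ω.orbit}) ∧
    IsClosed (Quotient.mk (orbitRel G (X × F)) '' {xv : X × F | xv.2 ∈ ω.orbit}) := by
  have hq : Topology.IsQuotientMap (Quotient.mk (orbitRel G (X × F))) :=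
    isQuotientMap_quotient_mk'
  have hpre := aux_preimage (G := G) (X := X) ω
  constructor
  · rw [← hq.isOpen_preimage, hpre]
    exact (isOpen_discrete ω.orbit).preimage continuous_snd
  · rw [← hq.isClosed_preimage, hpre]
    exact (isClosed_discrete ω.orbit).preimage continuous_snd

private lemma aux_pathComponent (x : X) (v : F) :
    pathComponent (Quotient.mk (orbitRel G (X × F)) (x, v)) =
      Quotient.mk (orbitRel G (X × F)) ''
        {xv : X × F | xv.2 ∈ orbitRel.Quotient.orbit
          (G := G) (α := F) (Quotient.mk'' v)} := by
  set ω : orbitRel.Quotient G F := Quotient.mk'' v with hω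
  have hmem : Quotient.mk (orbitRel G (X × F)) (x, v) ∈
      Quotient.mk (orbitRel G (X × F)) '' {xv : X × F | xv.2 ∈ ω.orbit} :=
    ⟨(x, v), by rw [Set.mem_setOf_eq, orbitRel.Quotient.mem_orbit], rfl⟩
  apply Set.Subset.antisymm
  · have hclopen : IsClopen (Quotient.mk (orbitRel G (X × F)) ''
        {xv : X × F | xv.2 ∈ ω.orbit}) := ⟨(aux_clopen ω).2, (aux_clopen ω).1⟩
    exact (pathComponent_subset_component _).trans
      (hclopen.connectedComponent_subset hmem)
  · exact (aux_pathConn ω).subset_pathComponent hmem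

end Aux

/-- If `X` is path-connected, then the path components of `(X × F)/G` are
precisely the images in `(X × F)/G` of the sets `X × O`, where `O` ranges over the
`G`-orbits in `F`; in particular each such image is path-connected, open, and closed. -/
theorem stmt_3 {G X F : Type*} [Group G] [TopologicalSpace X] [MulAction G X]
    [ContinuousConstSMul G X] [TopologicalSpace F] [DiscreteTopology F] [Finite F]
    [MulAction G F] [PathConnectedSpace X] :
    ({C : Set (Quotient (orbitRel G (X × F))) | ∃ q, C = pathComponent q} =
      {C : Set (Quotient (orbitRel G (X × F))) | ∃ ω : orbitRel.Quotient G F,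
        C = Quotient.mk (orbitRel G (X × F)) '' {xv : X × F | xv.2 ∈ ω.orbit}}) ∧
    ∀ ω : orbitRel.Quotient G F,
      IsPathConnected
        (Quotient.mk (orbitRel G (X × F)) '' {xv : X × F | xv.2 ∈ ω.orbit}) ∧
      IsOpen (Quotient.mk (orbitRel G (X × F)) '' {xv : X × F | xv.2 ∈ ω.orbit}) ∧
      IsClosed (Quotient.mk (orbitRel G (X × F)) '' {xv : X × F | xv.2 ∈ ω.orbit}) := by
  constructor
  · ext C
    constructor
    · rintro ⟨q, rfl⟩
      obtain ⟨⟨x, v⟩, rfl⟩ := Quotient.exists_rep q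
      exact ⟨Quotient.mk'' v, aux_pathComponent x v⟩
    · rintro ⟨ω, rfl⟩
      obtain ⟨x0⟩ : Nonempty X := PathConnectedSpace.nonempty
      refine ⟨Quotient.mk _ (x0, ω.out), ?_⟩
      rw [aux_pathComponent, Quotient.out_eq' ω]
  · exact fun ω => ⟨aux_pathConn ω, (aux_clopen ω).1, (aux_clopen ω).2⟩
end

section
/- Let x ∈ X with stabilizer G_x, let v ∈ F with stabilizer G_v = {g ∈ G : g•v = v}, and let U be an open neighbourhood of x that is invariant under G_x and satisfies g•U ∩ U = ∅ for every g ∉ G_x. Then the map U → (X×F)/G sending u to the class of (u, v) induces a homeomorphism from the orbit space U/(G_x ∩ G_v) (quotient of U by the restricted (G_x ∩ G_v)-action, with quotient topology) onto an open subset of (X×F)/G. -/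
open MulAction

/-- The setoid on a subset `U ⊆ X` whose classes are the orbits of the restricted action of
a subgroup `H ≤ G` on `U`. -/
def subSetoid {G X : Type*} [Group G] [MulAction G X] (H : Subgroup G) (U : Set X) :
    Setoid ↥U where
  r u u' := ∃ g ∈ H, g • (u : X) = (u' : X)
  iseqv := by
    constructor
    · exact fun u => ⟨1, H.one_mem, one_smul G (u : X)⟩
    · rintro u u' ⟨g, hg, h⟩
      exact ⟨g⁻¹, H.inv_mem hg, by rw [← h, inv_smul_smul]⟩
    · rintro u u' u'' ⟨g, hg, h⟩ ⟨g', hg', h'⟩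
      exact ⟨g' * g, H.mul_mem hg' hg, by rw [mul_smul, h, h']⟩

/-- Let `x ∈ X` with stabilizer `G_x`, let `v ∈ F` with stabilizer `G_v`,
and let `U` be an open neighbourhood of `x`, invariant under `G_x`, with `g • U ∩ U = ∅`
for `g ∉ G_x`.  Then `u ↦ ⟦(u, v)⟧` induces a homeomorphism from `U/(G_x ∩ G_v)` onto an
open subset of `(X × F)/G` (an open embedding). -/
theorem stmt_5 {G X F : Type*} [Group G] [TopologicalSpace X] [MulAction G X]
    [ContinuousConstSMul G X] [TopologicalSpace F] [DiscreteTopology F] [Finite F]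
    [MulAction G F] (x : X) (v : F) (U : Set X) (hUopen : IsOpen U) (hxU : x ∈ U)
    (hinv : ∀ g ∈ stabilizer G x, ∀ u ∈ U, g • u ∈ U)
    (hdisj : ∀ g : G, g ∉ stabilizer G x → Disjoint ((g • ·) '' U) U) :
    ∃ e : Quotient (subSetoid (stabilizer G x ⊓ stabilizer G v) U) →
        Quotient (orbitRel G (X × F)),
      (∀ u : ↥U, e (Quotient.mk (subSetoid (stabilizer G x ⊓ stabilizer G v) U) u) =
        Quotient.mk (orbitRel G (X × F)) ((u : X), v)) ∧
      Topology.IsOpenEmbedding e := by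
  haveI : ContinuousConstSMul G F := ⟨fun g => continuous_of_discreteTopology⟩
  set H := stabilizer G x ⊓ stabilizer G v with hH
  have sound' : ∀ {p q : X × F}, p ∈ orbit G q →
      Quotient.mk (orbitRel G (X × F)) p = Quotient.mk (orbitRel G (X × F)) q :=
    fun h => Quotient.sound (orbitRel_apply.mpr h)
  have exact' : ∀ {p q : X × F},
      Quotient.mk (orbitRel G (X × F)) p = Quotient.mk (orbitRel G (X × F)) q →
      p ∈ orbit G q :=
    fun h => orbitRel_apply.mp (Quotient.exact h)
  have hwd : ∀ u u' : ↥U, (subSetoid H U).r u u' →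
      Quotient.mk (orbitRel G (X × F)) ((u : X), v) =
      Quotient.mk (orbitRel G (X × F)) ((u' : X), v) := by
    rintro u u' ⟨g, hg, h⟩
    have hgv : g • v = v := mem_stabilizer_iff.mp ((Subgroup.mem_inf.mp hg).2)
    apply sound'
    refine ⟨g⁻¹, Prod.ext ?_ ?_⟩
    · show g⁻¹ • (u' : X) = (u : X)
      rw [← h, inv_smul_smul]
    · show g⁻¹ • v = v
      rw [← hgv, inv_smul_smul, hgv]
  refine ⟨Quotient.lift (fun u : ↥U => Quotient.mk (orbitRel G (X × F)) ((u : X), v)) hwd,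
    fun u => rfl, ?_⟩
  set e := Quotient.lift (fun u : ↥U => Quotient.mk (orbitRel G (X × F)) ((u : X), v)) hwd
    with he
  have hinj : Function.Injective e := by
    intro q q'
    obtain ⟨u, rfl⟩ := Quotient.exists_rep q
    obtain ⟨u', rfl⟩ := Quotient.exists_rep q'
    intro h
    have hex : ((u : X), v) ∈ orbit G ((u' : X), v) := exact' h
    obtain ⟨g, hg⟩ := hex
    have hgu : g • (u' : X) = (u : X) := congrArg Prod.fst hg
    have hgv : g • v = v := congrArg Prod.snd hg
    have hgstab : g ∈ stabilizer G x := by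
      by_contra hgs
      exact (Set.disjoint_left.mp (hdisj g hgs) ⟨(u' : X), u'.2, hgu⟩) u.2
    exact (Quotient.sound (⟨g, Subgroup.mem_inf.mpr ⟨hgstab, hgv⟩, hgu⟩ :
      (subSetoid H U).r u' u)).symm
  have hcont : Continuous e := by
    apply Continuous.quotient_lift
    exact continuous_quot_mk.comp (continuous_subtype_val.prodMk continuous_const)
  have hopen : IsOpenMap e := by
    intro S hS
    have hT : IsOpen ((Quotient.mk (subSetoid H U)) ⁻¹' S) :=
      hS.preimage continuous_quot_mk
    set T : Set ↥U := (Quotient.mk (subSetoid H U)) ⁻¹' S with hTdef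
    have hT' : IsOpen ((Subtype.val : ↥U → X) '' T) := hUopen.isOpenMap_subtype_val T hT
    have key : (Quotient.mk (orbitRel G (X × F))) ⁻¹' (e '' S) =
        ⋃ g : G, (g • ·) '' (((Subtype.val : ↥U → X) '' T) ×ˢ ({v} : Set F)) := by
      ext ⟨a, b⟩
      simp only [Set.mem_preimage, Set.mem_image, Set.mem_iUnion, Set.mem_prod,
        Set.mem_singleton_iff, Prod.exists]
      constructor
      · rintro ⟨q, hqS, hq⟩
        obtain ⟨u, rfl⟩ := Quotient.exists_rep q
        have hex : (a, b) ∈ orbit G ((u : X), v) := exact' hq.symm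
        obtain ⟨g, hg⟩ := hex
        exact ⟨g, (u : X), v, ⟨⟨u, hqS, rfl⟩, rfl⟩, hg⟩
      · rintro ⟨g, p, w, ⟨hp, hw⟩, hg⟩
        obtain ⟨u, huT, rfl⟩ := hp
        rw [hw] at hg
        refine ⟨Quotient.mk _ u, huT, ?_⟩
        show Quotient.mk (orbitRel G (X × F)) ((u : X), v) =
          Quotient.mk (orbitRel G (X × F)) (a, b)
        refine sound' ⟨g⁻¹, ?_⟩
        show g⁻¹ • (a, b) = ((u : X), v)
        rw [← hg, inv_smul_smul]
    have hpre : IsOpen ((Quotient.mk (orbitRel G (X × F))) ⁻¹' (e '' S)) := by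
      rw [key]
      exact isOpen_iUnion fun g => (isOpenMap_smul g) _ (hT'.prod (isOpen_discrete _))
    exact hpre
  exact Topology.IsOpenEmbedding.of_continuous_injective_isOpenMap hcont hinj hopen
end

section
/- Let G be the symmetric group on three letters, realized as the group of permutations of Fin 3. The set of quadruples (c₁, c₂, c₃, c₄) ∈ G⁴ satisfying c₁·c₂·c₃·c₄ = 1, orderOf c₁ = 2, orderOf c₂ = 2, orderOf c₃ = 3, orderOf c₄ = 3, and such that {c₁, c₂, c₃, c₄} generates G, has exactly 12 elements. -/
/-- The set of generating vectors of a group `G` with signature `(0; m₁, m₂, m₃, m₄)`: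
quadruples with product `1`, prescribed element orders, whose entries generate `G`. -/
def GenVec (G : Type*) [Group G] (m₁ m₂ m₃ m₄ : ℕ) : Set (G × G × G × G) :=
  {c | c.1 * c.2.1 * c.2.2.1 * c.2.2.2 = 1 ∧
       orderOf c.1 = m₁ ∧ orderOf c.2.1 = m₂ ∧ orderOf c.2.2.1 = m₃ ∧
       orderOf c.2.2.2 = m₄ ∧
       Subgroup.closure {c.1, c.2.1, c.2.2.1, c.2.2.2} = ⊤}

/-- A subgroup of `Σ₃` containing an element of order 2 and an element of order 3 is all
of `Σ₃`. -/
lemma closure_top (H : Subgroup (Equiv.Perm (Fin 3))) (x y : Equiv.Perm (Fin 3))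
    (hx : x ∈ H) (hy : y ∈ H) (hox : orderOf x = 2) (hoy : orderOf y = 3) : H = ⊤ := by
  have hc : Nat.card (Equiv.Perm (Fin 3)) = 6 := by
    rw [Nat.card_eq_fintype_card, Fintype.card_perm]; rfl
  have h2 : (2:ℕ) ∣ Nat.card H := by simpa [hox] using Subgroup.orderOf_dvd_natCard H hx
  have h3 : (3:ℕ) ∣ Nat.card H := by simpa [hoy] using Subgroup.orderOf_dvd_natCard H hy
  have h6 : 6 ∣ Nat.card H := Nat.Coprime.mul_dvd_of_dvd_of_dvd (by norm_num) h2 h3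
  have hle : Nat.card H ∣ 6 := hc ▸ Subgroup.card_subgroup_dvd_card H
  exact Subgroup.eq_top_of_card_eq H (by rw [Nat.dvd_antisymm hle h6, hc])

/-- An element has prime order `p` iff its `p`-th power is `1` and it is not `1`. -/
lemma order_prime_iff (p : ℕ) (hp : p.Prime) (x : Equiv.Perm (Fin 3)) :
    orderOf x = p ↔ x ^ p = 1 ∧ x ≠ 1 := by
  constructor
  · intro h
    refine ⟨by rw [← h]; exact pow_orderOf_eq_one x, ?_⟩
    rintro rfl
    rw [orderOf_one] at h
    exact hp.one_lt.ne' h.symm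
  · rintro ⟨h1, h2⟩
    rcases (Nat.dvd_prime hp).mp (orderOf_dvd_of_pow_eq_one h1) with h | h
    · exact absurd (orderOf_eq_one_iff.mp h) h2
    · exact h

/-- For `G = Σ₃`, the permutations of `Fin 3`, there are exactly `12`
generating vectors `(c₁, c₂, c₃, c₄)` with `c₁·c₂·c₃·c₄ = 1`, orders `2, 2, 3, 3`, whose
entries generate `G`. -/
theorem stmt_12 : Nat.card (GenVec (Equiv.Perm (Fin 3)) 2 2 3 3) = 12 := by
  have heq : GenVec (Equiv.Perm (Fin 3)) 2 2 3 3 =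
      {c : Equiv.Perm (Fin 3) × _ × _ × _ |
        c.1 * c.2.1 * c.2.2.1 * c.2.2.2 = 1 ∧
        (c.1 ^ 2 = 1 ∧ c.1 ≠ 1) ∧ (c.2.1 ^ 2 = 1 ∧ c.2.1 ≠ 1) ∧
        (c.2.2.1 ^ 3 = 1 ∧ c.2.2.1 ≠ 1) ∧ (c.2.2.2 ^ 3 = 1 ∧ c.2.2.2 ≠ 1)} := by
    ext ⟨a, b, c, d⟩
    simp only [GenVec, Set.mem_setOf_eq, order_prime_iff 2 Nat.prime_two,
      order_prime_iff 3 Nat.prime_three]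
    constructor
    · rintro ⟨h1, h2, h3, h4, h5, -⟩
      exact ⟨h1, h2, h3, h4, h5⟩
    · rintro ⟨h1, h2, h3, h4, h5⟩
      refine ⟨h1, h2, h3, h4, h5, ?_⟩
      apply closure_top _ a c
      · exact Subgroup.subset_closure (by simp)
      · exact Subgroup.subset_closure (by simp)
      · exact (order_prime_iff 2 Nat.prime_two a).mpr h2
      · exact (order_prime_iff 3 Nat.prime_three c).mpr h4
  rw [heq, Nat.card_eq_fintype_card]
  set_option maxRecDepth 20000 in decide
end

section
/- Let G be the group of permutations of Fin 3, let x be the transposition swapping 0 and 1, and let y be the 3-cycle sending 0↦1↦2↦0. Consider the set of quadruples (c₁, c₂, c₃, c₄) ∈ G⁴ with c₁·c₂·c₃·c₄ = 1, orderOf c₁ = orderOf c₂ = 2, orderOf c₃ = orderOf c₄ = 3, and whose entries generate G, with the automorphism group Aut(G) acting componentwise (ω·(c₁,c₂,c₃,c₄) = (ω(c₁),ω(c₂),ω(c₃),ω(c₄))). Then this action has exactly two orbits, the quadruples (x, x, y, y⁻¹) and (x, x·y, y, y) belong to this set, and they lie in different orbits. -/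
/-- Two quadruples are `Aut(G)`-related if some automorphism of `G` maps one to the other
componentwise. -/
def AutRel (G : Type*) [Group G] (v w : G × G × G × G) : Prop :=
  ∃ ω : MulAut G, (ω v.1, ω v.2.1, ω v.2.2.1, ω v.2.2.2) = w

section Aux

abbrev G3 := Equiv.Perm (Fin 3)

lemma order2 {c : G3} (h1 : c ^ 2 = 1) (h2 : c ≠ 1) : orderOf c = 2 :=
  orderOf_eq_prime h1 h2

lemma order3 {c : G3} (h1 : c ^ 3 = 1) (h2 : c ≠ 1) : orderOf c = 3 :=
  orderOf_eq_prime h1 h2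

lemma elems : ∀ g : G3, g = 1 ∨ g = finRotate 3 ∨ g = finRotate 3 * finRotate 3 ∨
    g = Equiv.swap 0 1 ∨ g = Equiv.swap 0 1 * finRotate 3 ∨
    g = Equiv.swap 0 1 * (finRotate 3 * finRotate 3) := by decide

lemma gen_top (H : Subgroup G3) (hx : Equiv.swap 0 1 ∈ H) (hy : finRotate 3 ∈ H) :
    H = ⊤ := by
  rw [Subgroup.eq_top_iff']
  intro g
  rcases elems g with h | h | h | h | h | h <;> rw [h]
  · exact one_mem H
  · exact hy
  · exact mul_mem hy hy
  · exact hx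
  · exact mul_mem hx hy
  · exact mul_mem hx (mul_mem hy hy)

set_option maxHeartbeats 4000000 in
set_option synthInstance.maxHeartbeats 1000000 in
set_option synthInstance.maxSize 2000 in
lemma key : ∀ c₁ c₂ c₃ c₄ : G3, (c₁ * c₂ * c₃ * c₄ = 1 ∧ c₁^2 = 1 ∧ c₁ ≠ 1 ∧ c₂^2 = 1 ∧ c₂ ≠ 1 ∧
    c₃^3 = 1 ∧ c₃ ≠ 1 ∧ c₄^3 = 1 ∧ c₄ ≠ 1) →
    (∃ g : G3, (g*c₁*g⁻¹, g*c₂*g⁻¹, g*c₃*g⁻¹, g*c₄*g⁻¹) =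
        ((Equiv.swap 0 1 : G3), Equiv.swap 0 1, finRotate 3, (finRotate 3)⁻¹)) ∨
    (∃ g : G3, (g*c₁*g⁻¹, g*c₂*g⁻¹, g*c₃*g⁻¹, g*c₄*g⁻¹) =
        ((Equiv.swap 0 1 : G3), Equiv.swap 0 1 * finRotate 3, finRotate 3, finRotate 3)) := by
  decide

lemma ord_pow_ne {c : G3} {n : ℕ} (h : orderOf c = n) (hn : n ≠ 1) :
    c ^ n = 1 ∧ c ≠ 1 := by
  constructor
  · rw [← h]; exact pow_orderOf_eq_one c
  · rintro rfl
    rw [orderOf_one] at h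
    exact hn h.symm

end Aux

/-- For `G` the permutations of `Fin 3`, `x` the transposition `(0 1)` and
`y` the 3-cycle `0 ↦ 1 ↦ 2 ↦ 0`, the componentwise `Aut(G)`-action on the generating
vectors of signature `(0;2,2,3,3)` has exactly two orbits; the quadruples
`(x, x, y, y⁻¹)` and `(x, x·y, y, y)` are generating vectors lying in different orbits,
and every generating vector is related to one of them. -/
theorem stmt_13 (x y : Equiv.Perm (Fin 3)) (hx : x = Equiv.swap 0 1)
    (hy : y = finRotate 3) :
    (x, x, y, y⁻¹) ∈ GenVec (Equiv.Perm (Fin 3)) 2 2 3 3 ∧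
    (x, x * y, y, y) ∈ GenVec (Equiv.Perm (Fin 3)) 2 2 3 3 ∧
    ¬ AutRel (Equiv.Perm (Fin 3)) (x, x, y, y⁻¹) (x, x * y, y, y) ∧
    ∀ v ∈ GenVec (Equiv.Perm (Fin 3)) 2 2 3 3,
      AutRel (Equiv.Perm (Fin 3)) v (x, x, y, y⁻¹) ∨
      AutRel (Equiv.Perm (Fin 3)) v (x, x * y, y, y) := by
  subst hx hy
  refine ⟨?_, ?_, ?_, ?_⟩
  · refine ⟨by decide, order2 (by decide) (by decide), order2 (by decide) (by decide),
      order3 (by decide) (by decide), ?_, ?_⟩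
    · rw [orderOf_inv]; exact order3 (by decide) (by decide)
    · apply gen_top
      · exact Subgroup.subset_closure (by simp)
      · have : (finRotate 3 : G3) = ((finRotate 3)⁻¹)⁻¹ := by simp
        rw [this]
        exact inv_mem (Subgroup.subset_closure (by simp))
  · refine ⟨by decide, order2 (by decide) (by decide), order2 (by decide) (by decide),
      order3 (by decide) (by decide), order3 (by decide) (by decide), ?_⟩
    apply gen_top
    · exact Subgroup.subset_closure (by simp)
    · exact Subgroup.subset_closure (by simp)
  · rintro ⟨ω, h⟩
    have h1 : ω (Equiv.swap 0 1) = Equiv.swap 0 1 := congrArg Prod.fst h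
    have h2 : ω (Equiv.swap 0 1) = Equiv.swap 0 1 * finRotate 3 :=
      congrArg (fun p => p.2.1) h
    rw [h1] at h2
    have : (finRotate 3 : G3) = 1 := by
      have := mul_left_cancel ((mul_one (Equiv.swap 0 1 : G3)).symm ▸ h2 :
        (Equiv.swap 0 1 : G3) * 1 = Equiv.swap 0 1 * finRotate 3)
      exact this.symm
    exact absurd this (by decide)
  · rintro ⟨c₁, c₂, c₃, c₄⟩ ⟨hprod, h1, h2, h3, h4, -⟩
    obtain ⟨h1a, h1b⟩ := ord_pow_ne h1 (by norm_num)
    obtain ⟨h2a, h2b⟩ := ord_pow_ne h2 (by norm_num)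
    obtain ⟨h3a, h3b⟩ := ord_pow_ne h3 (by norm_num)
    obtain ⟨h4a, h4b⟩ := ord_pow_ne h4 (by norm_num)
    rcases key c₁ c₂ c₃ c₄ ⟨hprod, h1a, h1b, h2a, h2b, h3a, h3b, h4a, h4b⟩ with
      ⟨g, hg⟩ | ⟨g, hg⟩
    · left
      exact ⟨MulAut.conj g, by simpa [MulAut.conj_apply] using hg⟩
    · right
      exact ⟨MulAut.conj g, by simpa [MulAut.conj_apply] using hg⟩
end
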